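/- arXiv:math/0001101 — 3 statements merged into one kernel-verified Lean document; each statement's English description precedes it below -/
import Mathlib

section
/- If a torsion-free group G fulfills the strong Atiyah conjecture over KG, where K is a subring of ℂ, then the group ring KG has no non-trivial zero divisors (i.e. KG is a domain). -/
noncomputable section

open scoped ENNReal

instance : Fact ((1 : ℝ≥0∞) ≤ 2) := ⟨one_le_two⟩

/-- The Hilbert space `ℓ²(G)ⁿ`, modeled as square-summable families indexed by
`Fin n × G`. -/
abbrev L2 (G : Type*) (n : ℕ) : Type _ := lp (fun _ : Fin n × G => ℂ) 2

variable {G : Type*} [Group G]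

/-- Convolution of a group ring element `a ∈ ℂG` with a function `x : G → ℂ`:
`(a ⋆ x)(g) = ∑_h a(h) · x(h⁻¹g)` (a finite sum over the support of `a`). -/
def conv (a : MonoidAlgebra ℂ G) (x : G → ℂ) (g : G) : ℂ :=
  ∑ h ∈ a.coeff.support, a.coeff h * x (h⁻¹ * g)

/-- The kernel of the bounded operator `ℓ²(G)ⁿ → ℓ²(G)ᵐ` given by left convolution
with the matrix `A` over the group ring `ℂG`. -/
def matrixKernel {m n : ℕ} (A : Matrix (Fin m) (Fin n) (MonoidAlgebra ℂ G)) :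
    Submodule ℂ (L2 G n) where
  carrier := {x | ∀ (i : Fin m) (g : G),
    ∑ j : Fin n, conv (A i j) (fun g' => x (j, g')) g = 0}
  zero_mem' := by
    intro i g
    simp [conv]
  add_mem' := by
    intro x y hx hy i g
    have hx' := hx i g
    have hy' := hy i g
    simp only [conv, lp.coeFn_add, Pi.add_apply, mul_add, Finset.sum_add_distrib] at *
    rw [hx', hy', add_zero]
  smul_mem' := by
    intro c x hx i g
    have hx' := hx i g
    simp only [conv, lp.coeFn_smul, Pi.smul_apply, smul_eq_mul] at *
    have : (∑ j : Fin _, ∑ h ∈ (A i j).coeff.support, (A i j).coeff h * (c * x (j, h⁻¹ * g)))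
        = c * ∑ j : Fin _, ∑ h ∈ (A i j).coeff.support, (A i j).coeff h * x (j, h⁻¹ * g) := by
      rw [Finset.mul_sum]
      exact Finset.sum_congr rfl fun j _ => by
        rw [Finset.mul_sum]
        exact Finset.sum_congr rfl fun h _ => by ring
    rw [this, hx', mul_zero]

/-- The vector `eᵢ ∈ ℓ²(G)ⁿ` whose `i`-th coordinate is the characteristic function
of the identity element of `G` and whose other coordinates vanish. -/
def stdVec (G : Type*) [Group G] (n : ℕ) (i : Fin n) : L2 G n :=
  letI : DecidableEq (Fin n × G) := Classical.decEq _
  lp.single 2 (i, (1 : G)) 1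

/-- The von Neumann dimension `dim_G(ker A) = ∑ᵢ ⟨P eᵢ, eᵢ⟩` where `P` is the
orthogonal projection of `ℓ²(G)ⁿ` onto the (closed) kernel of `A`. -/
def dimKer {m n : ℕ} (A : Matrix (Fin m) (Fin n) (MonoidAlgebra ℂ G)) : ℝ :=
  letI S := (matrixKernel A).topologicalClosure
  haveI : CompleteSpace S := (Submodule.isClosed_topologicalClosure _).completeSpace_coe
  ∑ i : Fin n,
    (inner ℂ ((Submodule.orthogonalProjectionOnto S (stdVec G n i) : L2 G n)) (stdVec G n i) : ℂ).re

/-- `G` fulfills the Atiyah conjecture of order `Λ` over `KG` (for `K ⊆ ℂ`):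
the von Neumann dimension of the kernel of any matrix over `KG` lies in `Λ`. -/
def AtiyahOfOrder (G : Type*) [Group G] (K : Subring ℂ) (Λ : AddSubgroup ℚ) : Prop :=
  ∀ (m n : ℕ) (A : Matrix (Fin m) (Fin n) (MonoidAlgebra ℂ G)),
    (∀ i j g, (A i j).coeff g ∈ K) → ∃ q ∈ Λ, (q : ℝ) = dimKer A

/-- The additive subgroup of `ℚ` generated by the inverses of the orders of the
finite subgroups of `G`. -/
def strongLambda (G : Type*) [Group G] : AddSubgroup ℚ :=
  AddSubgroup.closure {q : ℚ | ∃ F : Subgroup G, (F : Set G).Finite ∧ q = 1 / (Nat.card F : ℚ)}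

/-- The strong Atiyah conjecture for `G` over `KG`. -/
def StrongAtiyah (G : Type*) [Group G] (K : Subring ℂ) : Prop :=
  AtiyahOfOrder G K (strongLambda G)

/-- The strong Atiyah conjecture over `KG` in the torsion-free case: all kernel
dimensions of matrices over `KG` are integers. -/
def StrongAtiyahInt (G : Type*) [Group G] (K : Subring ℂ) : Prop :=
  ∀ (m n : ℕ) (A : Matrix (Fin m) (Fin n) (MonoidAlgebra ℂ G)),
    (∀ i j g, (A i j).coeff g ∈ K) → ∃ k : ℤ, (k : ℝ) = dimKer A

/-- The rationals, as a subring of `ℂ`. -/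
def ratSubring : Subring ℂ := (algebraMap ℚ ℂ).range


set_option linter.unusedSectionVars false

section Aux

open Finset

variable {G : Type*} [Group G]

theorem mulApply_eq_sum {R : Type*} [Ring R] (a b : MonoidAlgebra R G) (g : G) :
    (a * b).coeff g = ∑ h ∈ a.coeff.support, a.coeff h * b.coeff (h⁻¹ * g) := by
  classical
  rw [MonoidAlgebra.coeff_mul, Finsupp.sum]
  refine Finset.sum_congr rfl fun h _ => ?_
  rw [Finsupp.sum]
  have hcong : ∀ x ∈ b.coeff.support, (if h * x = g then a.coeff h * b.coeff x else 0)
      = if x = h⁻¹ * g then a.coeff h * b.coeff x else 0 := by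
    intro x _
    congr 1
    simp [eq_inv_mul_iff_mul_eq]
  rw [Finset.sum_congr rfl hcong, Finset.sum_ite_eq' b.coeff.support (h⁻¹ * g) (fun x => a.coeff h * b.coeff x)]
  split_ifs with hx
  · rfl
  · rw [Finsupp.notMem_support_iff.mp hx, mul_zero]

theorem L2.single_apply (i j : Fin 1 × G) (c : ℂ) [DecidableEq (Fin 1 × G)] :
    (lp.single (E := fun _ : Fin 1 × G => ℂ) 2 i c) j = if j = i then c else 0 := by
  rw [lp.single_apply]
  split_ifs with h
  · subst h; exact Pi.single_eq_same _ _
  · exact Pi.single_eq_of_ne h _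

/-- The inclusion of a finitely supported function into `ℓ²(G)¹`. -/
def toL2 (c : MonoidAlgebra ℂ G) : L2 G 1 :=
  letI : DecidableEq (Fin 1 × G) := Classical.decEq _
  ∑ h ∈ c.coeff.support, lp.single 2 ((0 : Fin 1), h) (c.coeff h)

theorem toL2_apply (c : MonoidAlgebra ℂ G) (j : Fin 1) (g : G) :
    (toL2 c) (j, g) = c.coeff g := by
  classical
  obtain rfl : j = 0 := Subsingleton.elim j 0
  rw [toL2, lp.coeFn_sum, Finset.sum_apply]
  simp only [L2.single_apply, Prod.mk.injEq, true_and]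
  rw [Finset.sum_ite_eq c.coeff.support g (fun h => c.coeff h)]
  split_ifs with hg
  · rfl
  · exact (Finsupp.notMem_support_iff.mp hg).symm

theorem L2.continuous_eval {n : ℕ} (k : Fin n × G) :
    Continuous fun x : L2 G n => x k := by
  have h : LipschitzWith 1 fun x : L2 G n => x k := by
    refine LipschitzWith.of_dist_le_mul fun x y => ?_
    simp only [NNReal.coe_one, one_mul, dist_eq_norm]
    have h := lp.norm_apply_le_norm (by norm_num : (2 : ℝ≥0∞) ≠ 0) (x - y) k
    simpa [lp.coeFn_sub] using h
  exact h.continuous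

theorem matrixKernel_isClosed {m n : ℕ} (A : Matrix (Fin m) (Fin n) (MonoidAlgebra ℂ G)) :
    IsClosed ((matrixKernel A : Set (L2 G n))) := by
  have hset : (matrixKernel A : Set (L2 G n)) = ⋂ (i : Fin m), ⋂ (g : G),
      {x : L2 G n | ∑ j : Fin n, conv (A i j) (fun g' => x (j, g')) g = 0} := by
    ext x
    simp only [Set.mem_iInter, Set.mem_setOf_eq]
    exact Iff.rfl
  rw [hset]
  refine isClosed_iInter fun i => isClosed_iInter fun g => isClosed_eq ?_ continuous_const
  refine continuous_finset_sum _ fun j _ => ?_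
  unfold conv
  exact continuous_finset_sum _ fun h _ =>
    continuous_const.mul (L2.continuous_eval (j, h⁻¹ * g))

theorem L2.norm_single_one [DecidableEq (Fin 1 × G)] (x : Fin 1 × G) :
    ‖(lp.single 2 x (1 : ℂ) : L2 G 1)‖ = 1 := by
  simpa using lp.norm_single (p := 2) (by norm_num)
    (fun _ : Fin 1 × G => (1 : ℂ)) x

theorem stdVec_eq [DecidableEq (Fin 1 × G)] :
    stdVec G 1 0 = lp.single 2 ((0 : Fin 1), (1 : G)) (1 : ℂ) := by
  rw [stdVec]
  apply lp.ext
  funext j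
  rw [L2.single_apply, L2.single_apply]
  split_ifs <;> rfl

end Aux

section Main

variable {G : Type*} [Group G]

theorem strongLambda_int (htf : ∀ g : G, g ≠ 1 → ¬IsOfFinOrder g) {q : ℚ}
    (hq : q ∈ strongLambda G) : ∃ k : ℤ, (k : ℚ) = q := by
  have hset : {q : ℚ | ∃ F : Subgroup G, (F : Set G).Finite ∧ q = 1 / (Nat.card F : ℚ)}
      ⊆ {1} := by
    rintro q ⟨F, hF, rfl⟩
    have hFbot : F = ⊥ := by
      rw [Subgroup.eq_bot_iff_forall]
      intro x hx
      haveI : Finite F := hF.to_subtype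
      have h1 : IsOfFinOrder (⟨x, hx⟩ : F) := isOfFinOrder_of_finite _
      have h2 : IsOfFinOrder x := F.subtype.isOfFinOrder h1
      by_contra hne
      exact htf x hne h2
    subst hFbot
    simp [Subgroup.card_bot]
  have h1 : q ∈ AddSubgroup.closure ({1} : Set ℚ) :=
    AddSubgroup.closure_mono hset hq
  rw [AddSubgroup.mem_closure_singleton] at h1
  obtain ⟨k, hk⟩ := h1
  exact ⟨k, by simpa using hk⟩

end Main

section Main2

variable {G' : Type*} [Group G']

theorem strongAtiyah_no_zero_divisors' (K : Subring ℂ)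
    (htf : ∀ g : G', g ≠ 1 → ¬IsOfFinOrder g) (h : StrongAtiyah G' K)
    (a b : MonoidAlgebra K G') (hab : a * b = 0) :
    a = 0 ∨ b = 0 := by
  classical
  by_cases ha : a = 0
  · exact Or.inl ha
  right
  set ι : K →+* ℂ := K.subtype with hι
  set a' : MonoidAlgebra ℂ G' := MonoidAlgebra.ofCoeff (a.coeff.mapRange ι (map_zero ι)) with ha'def
  set b' : MonoidAlgebra ℂ G' := MonoidAlgebra.ofCoeff (b.coeff.mapRange ι (map_zero ι)) with hb'def
  set A : Matrix (Fin 1) (Fin 1) (MonoidAlgebra ℂ G') := fun _ _ => a' with hA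
  have hsupp : a'.coeff.support = a.coeff.support :=
    Finsupp.support_mapRange_of_injective (map_zero ι) a.coeff Subtype.coe_injective
  -- the key convolution identity: conv a' with (a shifted copy of b') vanishes
  have hconv : ∀ (x : G' → ℂ) (g : G'),
      conv a' x g = ∑ h ∈ a.coeff.support, (a.coeff h : ℂ) * x (h⁻¹ * g) := by
    intro x g
    rw [conv, hsupp]
    refine Finset.sum_congr rfl fun h hh => ?_
    rw [ha'def, MonoidAlgebra.coeff_ofCoeff, Finsupp.mapRange_apply]
    rfl
  obtain ⟨q, hq, hqd⟩ := h 1 1 A (by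
    intro i j g
    rw [hA]
    show a'.coeff g ∈ K
    rw [ha'def, MonoidAlgebra.coeff_ofCoeff, Finsupp.mapRange_apply]
    exact (a.coeff g).2)
  obtain ⟨k, hk⟩ := strongLambda_int htf hq
  -- setup for the projection
  set S := (matrixKernel A).topologicalClosure with hS
  haveI : CompleteSpace S := (Submodule.isClosed_topologicalClosure _).completeSpace_coe
  set e : L2 G' 1 := stdVec G' 1 0 with he
  set P := S.orthogonalProjectionOnto with hP
  have hdim : dimKer A = (inner ℂ ((P e : L2 G' 1)) e : ℂ).re := by
    unfold dimKer
    rw [Fin.sum_univ_one]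
  have h0 : (inner ℂ (e - (P e : L2 G' 1)) ((P e : L2 G' 1)) : ℂ) = 0 :=
    Submodule.starProjection_inner_eq_zero e _ (P e).2
  have h1 : (inner ℂ e ((P e : L2 G' 1)) : ℂ) = inner ℂ ((P e : L2 G' 1)) ((P e : L2 G' 1)) := by
    rw [inner_sub_left, sub_eq_zero] at h0
    exact h0
  have hPe : (inner ℂ ((P e : L2 G' 1)) e : ℂ) = ((‖(P e : L2 G' 1)‖ : ℂ))^2 := by
    rw [← inner_conj_symm, h1, inner_self_eq_norm_sq_to_K]
    simp [← Complex.ofReal_pow, Complex.conj_ofReal]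
  have hre : dimKer A = ‖(P e : L2 G' 1)‖^2 := by
    rw [hdim, hPe, ← Complex.ofReal_pow, Complex.ofReal_re]
  have he1 : e = lp.single 2 ((0 : Fin 1), (1 : G')) (1 : ℂ) := by
    rw [he]; exact stdVec_eq
  have hne : ‖e‖ = 1 := by
    rw [he1]
    exact L2.norm_single_one _
  have h0' : (inner ℂ ((P e : L2 G' 1)) (e - (P e : L2 G' 1)) : ℂ) = 0 := by
    rw [← inner_conj_symm, h0, map_zero]
  have hpyth : ‖e‖^2 = ‖(P e : L2 G' 1)‖^2 + ‖e - (P e : L2 G' 1)‖^2 := by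
    have h2 := norm_add_sq_eq_norm_sq_add_norm_sq_of_inner_eq_zero (𝕜 := ℂ)
      ((P e : L2 G' 1)) (e - (P e : L2 G' 1)) h0'
    have h3 : (P e : L2 G' 1) + (e - (P e : L2 G' 1)) = e := by abel
    rw [h3] at h2
    rw [pow_two, pow_two, pow_two]
    exact h2
  -- the dimension is 0 or 1
  have hkd : (k : ℝ) = dimKer A := by
    rw [← hqd]
    exact_mod_cast hk
  have hk01 : k = 0 ∨ k = 1 := by
    have hge : (0 : ℝ) ≤ (k : ℝ) := by rw [hkd, hre]; exact sq_nonneg _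
    have hle : (k : ℝ) ≤ 1 := by
      rw [hkd, hre]
      have hsum : (1 : ℝ) = ‖(P e : L2 G' 1)‖^2 + ‖e - (P e : L2 G' 1)‖^2 := by
        rw [← hpyth, hne, one_pow]
      have h4 := sq_nonneg ‖e - (P e : L2 G' 1)‖
      linarith
    have hge' : (0 : ℤ) ≤ k := by exact_mod_cast hge
    have hle' : k ≤ 1 := by exact_mod_cast hle
    omega
  rcases hk01 with hk0 | hk1
  · -- dimension zero: b = 0
    have hPe0 : ((P e : L2 G' 1)) = 0 := by
      have hsq : ‖(P e : L2 G' 1)‖^2 = 0 := by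
        rw [← hre, ← hkd, hk0]; norm_num
      have := pow_eq_zero_iff (n := 2) (by norm_num) |>.mp hsq
      rwa [norm_eq_zero] at this
    have horth : e ∈ Sᗮ := by
      have h5 : e - (P e : L2 G' 1) ∈ Sᗮ := Submodule.sub_starProjection_mem_orthogonal (K := S) e
      rwa [hPe0, sub_zero] at h5
    refine MonoidAlgebra.ext (Finsupp.ext fun h0 => ?_)
    simp only [MonoidAlgebra.coeff_zero, Finsupp.coe_zero, Pi.zero_apply, Finsupp.zero_apply]
    set c : MonoidAlgebra ℂ G' := b' * MonoidAlgebra.single h0⁻¹ 1 with hc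
    have hcval : ∀ y, c.coeff y = ((b.coeff (y * h0) : K) : ℂ) := by
      intro y
      rw [hc, MonoidAlgebra.coeff_mul_single_apply, inv_inv, mul_one, hb'def,
        MonoidAlgebra.coeff_ofCoeff, Finsupp.mapRange_apply]
      rfl
    have hcmem : toL2 c ∈ matrixKernel A := by
      intro i g
      rw [Fin.sum_univ_one]
      have hAij : A i 0 = a' := by rw [hA]
      rw [hAij]
      have hfn : (fun g' => (toL2 c) ((0 : Fin 1), g')) = fun g' => c.coeff g' :=
        funext fun g' => toL2_apply c 0 g'
      rw [hfn, hconv]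
      have hterm : ∀ h ∈ a.coeff.support,
          (a.coeff h : ℂ) * c.coeff (h⁻¹ * g) = ((a.coeff h * b.coeff (h⁻¹ * (g * h0)) : K) : ℂ) := by
        intro h _
        rw [hcval, mul_assoc]
        push_cast
        ring
      rw [Finset.sum_congr rfl hterm]
      calc ∑ h ∈ a.coeff.support, ((a.coeff h * b.coeff (h⁻¹ * (g * h0)) : K) : ℂ)
          = ((∑ h ∈ a.coeff.support, a.coeff h * b.coeff (h⁻¹ * (g * h0)) : K) : ℂ) := by
            push_cast; ring
        _ = (((a * b).coeff (g * h0) : K) : ℂ) := by rw [← mulApply_eq_sum]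
        _ = 0 := by rw [hab]; simp
    have hinner : (inner ℂ (toL2 c) e : ℂ) = 0 :=
      (Submodule.mem_orthogonal S e).mp horth (toL2 c)
        (Submodule.le_topologicalClosure _ hcmem)
    rw [he1, lp.inner_single_right] at hinner
    have hc1 : c.coeff 1 = 0 := by
      simpa [RCLike.inner_apply, toL2_apply] using hinner
    rw [hcval, one_mul] at hc1
    exact_mod_cast hc1
  · -- dimension one: contradiction with a ≠ 0
    have hP1 : ‖(P e : L2 G' 1)‖^2 = 1 := by
      rw [← hre, ← hkd, hk1]; norm_num
    have hzero : ‖e - (P e : L2 G' 1)‖^2 = 0 := by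
      have h6 := hpyth
      rw [hne, one_pow, hP1] at h6
      linarith
    have hePe : e = (P e : L2 G' 1) := by
      have h7 := pow_eq_zero_iff (n := 2) (by norm_num) |>.mp hzero
      rwa [norm_eq_zero, sub_eq_zero] at h7
    have hSle : S ≤ matrixKernel A :=
      Submodule.topologicalClosure_minimal (matrixKernel A) (le_refl _)
        (matrixKernel_isClosed A)
    have hmem : e ∈ matrixKernel A := hSle (by rw [hePe]; exact (P e).2)
    exfalso
    apply ha
    refine MonoidAlgebra.ext (Finsupp.ext fun g => ?_)
    simp only [MonoidAlgebra.coeff_zero, Finsupp.coe_zero, Pi.zero_apply, Finsupp.zero_apply]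
    have h8 := hmem 0 g
    rw [Fin.sum_univ_one] at h8
    have hAij : A (0 : Fin 1) 0 = a' := by rw [hA]
    rw [hAij, hconv] at h8
    have hterm : ∀ h ∈ a.coeff.support,
        (a.coeff h : ℂ) * e ((0 : Fin 1), h⁻¹ * g) = if h = g then (a.coeff h : ℂ) else 0 := by
      intro h _
      rw [he1, L2.single_apply]
      by_cases hg : h = g
      · subst hg
        simp
      · rw [if_neg (by simp [Prod.ext_iff, inv_mul_eq_one, hg]), if_neg hg, mul_zero]
    rw [Finset.sum_congr rfl hterm, Finset.sum_ite_eq' a.coeff.support g (fun h => ((a.coeff h : ℂ)))] at h8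
    split_ifs at h8 with hgs
    · exact_mod_cast h8
    · exact Finsupp.notMem_support_iff.mp hgs

end Main2

/-- **Lemma (zero divisor conjecture from the strong Atiyah conjecture).**
If a torsion-free group `G` fulfills the strong Atiyah conjecture over `KG`, where
`K` is a subring of `ℂ`, then the group ring `KG` has no non-trivial zero divisors. -/
theorem strongAtiyah_no_zero_divisors (G : Type*) [Group G] (K : Subring ℂ)
    (htf : ∀ g : G, g ≠ 1 → ¬IsOfFinOrder g) (h : StrongAtiyah G K)
    (a b : MonoidAlgebra K G) (hab : a * b = 0) :
    a = 0 ∨ b = 0 := by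
  exact strongAtiyah_no_zero_divisors' K htf h a b hab
end
end

section
/- Let p : H → A be a group homomorphism, let G be a group, and let q = p * 1 : H * G → A be the homomorphism on the free product that restricts to p on H and is trivial on G. Let E be a subgroup of A and let T be a transversal for p⁻¹(E) in H (a set of representatives of the left cosets H/p⁻¹(E)). Then q⁻¹(E) is the subgroup of H * G generated by p⁻¹(E) together with the conjugates t⁻¹Gt for t ∈ T, and q⁻¹(E) is isomorphic to the free product p⁻¹(E) * (*_{t∈T} t⁻¹Gt). -/
noncomputable section

namespace FPAux

open Monoid Subgroup

variable {H G A : Type*} [Group H] [Group G] [Group A]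
variable {p : H →* A} {E : Subgroup A} {T : Set H}
variable (hT : ∀ h : H, ∃! t, t ∈ T ∧ h⁻¹ * t ∈ E.comap p)

def rep (h : H) : H := (hT h).exists.choose

lemma rep_mem (h : H) : rep hT h ∈ T := (hT h).exists.choose_spec.1

lemma rep_spec (h : H) : h⁻¹ * rep hT h ∈ E.comap p := (hT h).exists.choose_spec.2

lemma rep_eq {h t : H} (h1 : t ∈ T) (h2 : h⁻¹ * t ∈ E.comap p) : rep hT h = t :=
  (hT h).unique ⟨rep_mem hT h, rep_spec hT h⟩ ⟨h1, h2⟩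

lemma rep_congr {a b : H} (hab : a⁻¹ * b ∈ E.comap p) : rep hT a = rep hT b := by
  apply rep_eq hT (rep_mem hT b)
  have h := mul_mem hab (rep_spec hT b)
  rwa [show a⁻¹ * b * (b⁻¹ * rep hT b) = a⁻¹ * rep hT b by group] at h

def uOf (h : H) : ↥(E.comap p) :=
  ⟨(rep hT h)⁻¹ * h, by
    have := (E.comap p).inv_mem (rep_spec hT h)
    rwa [mul_inv_rev, inv_inv] at this⟩

lemma uOf_coe (h : H) : (uOf hT h : H) = (rep hT h)⁻¹ * h := rfl

variable (G) in
/-- Action of `H` on `T × P`. -/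
def rhoH : H →* Function.End (T × Coprod ↥(E.comap p) (CoprodI fun _ : T => G)) where
  toFun h s := (⟨rep hT (h * s.1), rep_mem hT _⟩, Coprod.inl (uOf hT (h * s.1)) * s.2)
  map_one' := funext fun s => by
    have h1 : rep hT ((1 : H) * s.1) = s.1 :=
      rep_eq hT s.1.2 (by rw [one_mul, inv_mul_cancel]; exact one_mem _)
    have h2 : uOf hT ((1 : H) * s.1) = 1 := by
      apply Subtype.ext
      rw [uOf_coe, h1, one_mul, inv_mul_cancel]; rfl
    show (_, _) = s
    refine Prod.ext (Subtype.ext (by simpa using h1)) ?_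
    show Coprod.inl (uOf hT ((1 : H) * s.1)) * s.2 = s.2
    rw [h2, map_one, one_mul]
  map_mul' h₁ h₂ := funext fun s => by
    show (_, _) = (_, _)
    have hr : rep hT (h₁ * h₂ * s.1) = rep hT (h₁ * rep hT (h₂ * s.1)) := by
      apply (rep_congr hT _).symm
      have h := (E.comap p).inv_mem (rep_spec hT (h₂ * s.1))
      rwa [show ((h₂ * s.1)⁻¹ * rep hT (h₂ * s.1))⁻¹
          = (h₁ * rep hT (h₂ * (s.1 : H)))⁻¹ * (h₁ * h₂ * s.1) by group] at h
    have hu : uOf hT (h₁ * rep hT (h₂ * s.1)) * uOf hT (h₂ * s.1) = uOf hT (h₁ * h₂ * s.1) := by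
      apply Subtype.ext
      push_cast [uOf_coe, hr]
      group
    refine Prod.ext (Subtype.ext (by simpa using hr)) ?_
    show Coprod.inl (uOf hT (h₁ * h₂ * s.1)) * s.2
      = Coprod.inl (uOf hT (h₁ * rep hT (h₂ * s.1))) * (Coprod.inl (uOf hT (h₂ * s.1)) * s.2)
    rw [← mul_assoc, ← map_mul, hu]

variable (G p E T) in
/-- Action of `G` on `T × P`. -/
def rhoG : G →* Function.End (T × Coprod ↥(E.comap p) (CoprodI fun _ : T => G)) where
  toFun g s := (s.1, Coprod.inr (CoprodI.of (i := s.1) g) * s.2)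
  map_one' := funext fun s => by
    show (_, _) = s
    rw [map_one, map_one, one_mul]
  map_mul' g₁ g₂ := funext fun s => by
    show (_, _) = (_, _)
    rw [map_mul, map_mul, mul_assoc]

variable (G) in
def rho : Coprod H G →* Function.End (T × Coprod ↥(E.comap p) (CoprodI fun _ : T => G)) :=
  Coprod.lift (rhoH G hT) (rhoG G p E T)

variable (G p E T) in
def phi : Coprod ↥(E.comap p) (CoprodI fun _ : T => G) →* Coprod H G :=
  Coprod.lift ((Coprod.inl : H →* Coprod H G).comp (E.comap p).subtype)
    (CoprodI.lift fun t =>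
      ((MulAut.conj ((Coprod.inl (t : H) : Coprod H G))⁻¹).toMonoidHom.comp
        (Coprod.inr : G →* Coprod H G)))

@[simp] lemma phi_inl (u : ↥(E.comap p)) :
    phi G p E T (Coprod.inl u) = Coprod.inl (u : H) := by
  simp [phi]

@[simp] lemma phi_inr_of (t : T) (g : G) :
    phi G p E T (Coprod.inr (CoprodI.of (i := t) g))
      = (Coprod.inl (t : H))⁻¹ * Coprod.inr g * Coprod.inl (t : H) := by
  simp [phi, mul_assoc]

lemma rho_inl_mul (h : H) (x : Coprod H G) (s) :
    rho G hT (Coprod.inl h * x) s = rhoH G hT h (rho G hT x s) := by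
  rw [map_mul, rho, Coprod.lift_apply_inl]; rfl

lemma rho_inr_mul (g : G) (x : Coprod H G) (s) :
    rho G hT (Coprod.inr g * x) s = rhoG G p E T g (rho G hT x s) := by
  rw [map_mul, rho, Coprod.lift_apply_inr]; rfl

lemma lift_phi_mem (d : Coprod ↥(E.comap p) (CoprodI fun _ : T => G)) :
    Coprod.lift p (1 : G →* A) (phi G p E T d) ∈ E := by
  induction d using Coprod.induction_on with
  | inl u =>
    show Coprod.lift p (1 : G →* A) (phi G p E T (Coprod.inl u)) ∈ E
    rw [phi_inl, Coprod.lift_apply_inl]; exact u.2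
  | inr n =>
    induction n using CoprodI.induction_on with
    | one => simp only [map_one]; exact one_mem _
    | of t g =>
      have : Coprod.lift p (1 : G →* A) (phi G p E T (Coprod.inr (CoprodI.of (i := t) g))) = 1 := by
        simp
      rw [this]; exact one_mem _
    | mul x y hx hy => rw [map_mul, map_mul, map_mul]; exact mul_mem hx hy
  | mul x y hx hy => rw [map_mul, map_mul]; exact mul_mem hx hy

/-- Invariant A: the action tracks left multiplication. -/
lemma rho_spec (x : Coprod H G) (s : T × Coprod ↥(E.comap p) (CoprodI fun _ : T => G)) :
    Coprod.inl ((rho G hT x s).1 : H) * phi G p E T ((rho G hT x s).2)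
      = x * (Coprod.inl (s.1 : H) * phi G p E T s.2) := by
  induction x using Coprod.induction_on' with
  | one => rw [map_one]; simp [Function.End.one_def]
  | inl_mul h x ih =>
    rw [rho_inl_mul]
    set s' := rho G hT x s with hs'
    show Coprod.inl (rep hT (h * s'.1)) * phi G p E T (Coprod.inl (uOf hT (h * s'.1)) * s'.2) = _
    rw [map_mul, phi_inl, ← mul_assoc, ← map_mul, uOf_coe, mul_inv_cancel_left, map_mul,
      mul_assoc, ih, ← mul_assoc]
  | inr_mul g x ih =>
    rw [rho_inr_mul]
    set s' := rho G hT x s with hs'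
    show Coprod.inl (s'.1 : H) * phi G p E T (Coprod.inr (CoprodI.of (i := s'.1) g) * s'.2) = _
    rw [map_mul, phi_inr_of, mul_assoc (Coprod.inr g) x, ← ih]
    group

/-- Invariant B: the second component acts by left translation. -/
lemma rho_snd (x : Coprod H G) (s : T × Coprod ↥(E.comap p) (CoprodI fun _ : T => G)) :
    rho G hT x s = ((rho G hT x (s.1, 1)).1, (rho G hT x (s.1, 1)).2 * s.2) := by
  induction x using Coprod.induction_on' generalizing s with
  | one => rw [map_one]; simp [Function.End.one_def]
  | inl_mul h x ih =>
    rw [rho_inl_mul, rho_inl_mul, ih]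
    show (_, _) = (_, _)
    refine Prod.ext rfl ?_
    show Coprod.inl (uOf hT _) * ((rho G hT x (s.1, 1)).2 * s.2)
      = Coprod.inl (uOf hT _) * (rho G hT x (s.1, 1)).2 * s.2
    rw [mul_assoc]
  | inr_mul g x ih =>
    rw [rho_inr_mul, rho_inr_mul, ih]
    show (_, _) = (_, _)
    refine Prod.ext rfl ?_
    show Coprod.inr (CoprodI.of (i := (rho G hT x (s.1, 1)).1) g) * ((rho G hT x (s.1, 1)).2 * s.2)
      = Coprod.inr (CoprodI.of (i := (rho G hT x (s.1, 1)).1) g) * (rho G hT x (s.1, 1)).2 * s.2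
    rw [mul_assoc]

lemma t0_mem : rep hT 1 ∈ E.comap p := by
  have := rep_spec hT 1
  rwa [inv_one, one_mul] at this

def t0T : T := ⟨rep hT 1, rep_mem hT 1⟩

def u0 : ↥(E.comap p) := ⟨rep hT 1, t0_mem hT⟩

variable (G) in
def e0 : Coprod ↥(E.comap p) (CoprodI fun _ : T => G) := Coprod.inl (u0 hT)

lemma uOf_one : uOf hT (1 : H) = (u0 hT)⁻¹ := by
  apply Subtype.ext
  rw [uOf_coe, mul_one]
  rfl

lemma inl_u0_inv : (Coprod.inl (((u0 hT)⁻¹ : ↥(E.comap p)) : H) : Coprod H G)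
    = (Coprod.inl (rep hT 1))⁻¹ := by
  rw [show (((u0 hT)⁻¹ : ↥(E.comap p)) : H) = (rep hT 1)⁻¹ from rfl, map_inv]

lemma hbase : Coprod.inl ((t0T hT : H)) * phi G p E T (Coprod.inl (u0 hT)⁻¹) = 1 := by
  rw [phi_inl, inl_u0_inv]
  show Coprod.inl (rep hT 1) * (Coprod.inl (rep hT 1))⁻¹ = 1
  rw [mul_inv_cancel]

/-- The first component of the action on the base point is `t₀` for elements of the preimage. -/
lemma rho_fst {x : Coprod H G} (hx : Coprod.lift p (1 : G →* A) x ∈ E) (c) :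
    (rho G hT x (t0T hT, c)).1 = t0T hT := by
  have h1 := rho_spec hT x (t0T hT, Coprod.inl (u0 hT)⁻¹)
  rw [hbase, mul_one] at h1
  have h2 := congrArg (Coprod.lift p (1 : G →* A)) h1
  rw [map_mul, Coprod.lift_apply_inl] at h2
  have h3 : p ((rho G hT x (t0T hT, Coprod.inl (u0 hT)⁻¹)).1 : H) ∈ E := by
    have hm := lift_phi_mem (G := G) (p := p) (E := E) (T := T) ((rho G hT x (t0T hT, Coprod.inl (u0 hT)⁻¹)).2)
    have hh := mul_mem hx (E.inv_mem hm)
    rwa [← h2, mul_inv_cancel_right] at hh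
  have h4 : rep hT 1 = ((rho G hT x (t0T hT, Coprod.inl (u0 hT)⁻¹)).1 : H) :=
    rep_eq hT (rho G hT x (t0T hT, Coprod.inl (u0 hT)⁻¹)).1.2 (by rwa [inv_one, one_mul])
  have h5 : (rho G hT x (t0T hT, Coprod.inl (u0 hT)⁻¹)).1 = t0T hT :=
    Subtype.ext h4.symm
  have h6 := rho_snd hT x (t0T hT, Coprod.inl (u0 hT)⁻¹)
  have h7 := rho_snd hT x (t0T hT, c)
  have h8 : (rho G hT x (t0T hT, c)).1 = (rho G hT x (t0T hT, Coprod.inl (u0 hT)⁻¹)).1 := by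
    rw [h6, h7]
  rw [h8, h5]

/-- Key decomposition: elements of the preimage factor through `φ`. -/
lemma key {x : Coprod H G} (hx : Coprod.lift p (1 : G →* A) x ∈ E) :
    x = Coprod.inl (rep hT 1) * phi G p E T ((rho G hT x (t0T hT, 1)).2)
        * (Coprod.inl (rep hT 1))⁻¹ := by
  have h1 := rho_spec hT x (t0T hT, Coprod.inl (u0 hT)⁻¹)
  rw [hbase, mul_one] at h1
  rw [rho_fst hT hx, rho_snd hT x (t0T hT, Coprod.inl (u0 hT)⁻¹)] at h1
  simp only [map_mul, phi_inl] at h1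
  rw [inl_u0_inv] at h1
  conv_lhs => rw [← h1]
  rw [mul_assoc]
  rfl

lemma rho_inl_apply (h : H) (s) : rho G hT (Coprod.inl h) s = rhoH G hT h s := by
  rw [rho, Coprod.lift_apply_inl]

lemma rho_inr_apply (g : G) (s) : rho G hT (Coprod.inr g) s = rhoG G p E T g s := by
  rw [rho, Coprod.lift_apply_inr]

lemma rho_mul_apply (x y : Coprod H G) (s) :
    rho G hT (x * y) s = rho G hT x (rho G hT y s) := by
  rw [map_mul]; rfl

/-- Invariant C: conjugation formula for the action on `φ`-images. -/
lemma rho_phi (d : Coprod ↥(E.comap p) (CoprodI fun _ : T => G)) :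
    ∀ c, rho G hT (phi G p E T d) (t0T hT, c)
      = (t0T hT, (e0 G hT)⁻¹ * d * e0 G hT * c) := by
  induction d using Coprod.induction_on with
  | inl u =>
    intro c
    rw [phi_inl, rho_inl_apply]
    have hrep : rep hT ((u : H) * rep hT 1) = rep hT 1 := by
      apply rep_eq hT (rep_mem hT 1)
      have he : ((u : H) * rep hT 1)⁻¹ * rep hT 1
          = (rep hT 1)⁻¹ * ((u : H)⁻¹ * rep hT 1) := by group
      rw [he]
      exact mul_mem (inv_mem (t0_mem hT)) (mul_mem (inv_mem u.2) (t0_mem hT))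
    have hu : uOf hT ((u : H) * rep hT 1) = (u0 hT)⁻¹ * u * u0 hT := by
      apply Subtype.ext
      push_cast [uOf_coe, hrep]
      show (rep hT 1)⁻¹ * ((u : H) * rep hT 1) = (rep hT 1)⁻¹ * (u : H) * rep hT 1
      rw [mul_assoc]
    refine Prod.ext (Subtype.ext ?_) ?_
    · show rep hT ((u : H) * rep hT 1) = rep hT 1
      exact hrep
    · show Coprod.inl (uOf hT ((u : H) * rep hT 1)) * c
        = (e0 G hT)⁻¹ * Coprod.inl u * e0 G hT * c
      rw [hu, map_mul, map_mul, map_inv]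
      rfl
  | inr n =>
    induction n using CoprodI.induction_on with
    | one =>
      intro c
      rw [map_one, map_one, map_one]
      refine Prod.ext rfl ?_
      show c = (e0 G hT)⁻¹ * 1 * e0 G hT * c
      group
    | of t g =>
      intro c
      have hstep1 : rho G hT (Coprod.inl (t : H)) (t0T hT, c) = (t, e0 G hT * c) := by
        rw [rho_inl_apply]
        have hrep1 : rep hT ((t : H) * rep hT 1) = (t : H) := by
          apply rep_eq hT t.2
          have he : ((t : H) * rep hT 1)⁻¹ * (t : H) = (rep hT 1)⁻¹ := by group
          rw [he]; exact inv_mem (t0_mem hT)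
        have hu1 : uOf hT ((t : H) * rep hT 1) = u0 hT := by
          apply Subtype.ext
          rw [uOf_coe, hrep1]
          show (t : H)⁻¹ * ((t : H) * rep hT 1) = rep hT 1
          group
        refine Prod.ext (Subtype.ext ?_) ?_
        · show rep hT ((t : H) * rep hT 1) = (t : H)
          exact hrep1
        · show Coprod.inl (uOf hT ((t : H) * rep hT 1)) * c = e0 G hT * c
          rw [hu1]
          rfl
      have hstep3 : ∀ X, rho G hT (Coprod.inl ((t : H)⁻¹)) (t, X)
          = (t0T hT, (e0 G hT)⁻¹ * X) := by
        intro X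
        rw [rho_inl_apply]
        have h1 : rep hT ((t : H)⁻¹ * (t : H)) = rep hT 1 := by rw [inv_mul_cancel]
        have hu3 : uOf hT ((t : H)⁻¹ * (t : H)) = (u0 hT)⁻¹ := by
          rw [inv_mul_cancel]; exact uOf_one hT
        refine Prod.ext (Subtype.ext ?_) ?_
        · show rep hT ((t : H)⁻¹ * (t : H)) = rep hT 1
          exact h1
        · show Coprod.inl (uOf hT ((t : H)⁻¹ * (t : H))) * X = (e0 G hT)⁻¹ * X
          rw [hu3, map_inv]
          rfl
      rw [phi_inr_of, rho_mul_apply, rho_mul_apply, ← map_inv, hstep1, rho_inr_apply]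
      show rho G hT (Coprod.inl ((t : H)⁻¹))
          (t, Coprod.inr (CoprodI.of (i := t) g) * (e0 G hT * c)) = _
      rw [hstep3]
      refine Prod.ext rfl ?_
      show (e0 G hT)⁻¹ * (Coprod.inr (CoprodI.of (i := t) g) * (e0 G hT * c))
        = (e0 G hT)⁻¹ * Coprod.inr (CoprodI.of (i := t) g) * e0 G hT * c
      group
    | mul n₁ n₂ ih₁ ih₂ =>
      intro c
      rw [map_mul, map_mul, rho_mul_apply, ih₂, ih₁]
      refine Prod.ext rfl ?_
      show (e0 G hT)⁻¹ * Coprod.inr n₁ * e0 G hT * ((e0 G hT)⁻¹ * Coprod.inr n₂ * e0 G hT * c)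
        = (e0 G hT)⁻¹ * (Coprod.inr n₁ * Coprod.inr n₂) * e0 G hT * c
      group
  | mul d₁ d₂ ih₁ ih₂ =>
    intro c
    rw [map_mul, rho_mul_apply, ih₂, ih₁]
    refine Prod.ext rfl ?_
    show (e0 G hT)⁻¹ * d₁ * e0 G hT * ((e0 G hT)⁻¹ * d₂ * e0 G hT * c)
      = (e0 G hT)⁻¹ * (d₁ * d₂) * e0 G hT * c
    group

variable (G) in
lemma phi_mem_closure (d : Coprod ↥(E.comap p) (CoprodI fun _ : T => G)) :
    phi G p E T d ∈ Subgroup.closure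
        ((Coprod.inl '' (E.comap p : Set H)) ∪
          ⋃ t ∈ T, Set.range (fun g : G =>
            (Coprod.inl t)⁻¹ * Coprod.inr g * Coprod.inl t)) := by
  induction d using Coprod.induction_on with
  | inl u =>
    rw [phi_inl]
    exact Subgroup.subset_closure (Or.inl ⟨(u : H), u.2, rfl⟩)
  | inr n =>
    induction n using CoprodI.induction_on with
    | one => rw [map_one, map_one]; exact one_mem _
    | of t g =>
      rw [phi_inr_of]
      refine Subgroup.subset_closure (Or.inr ?_)
      simp only [Set.mem_iUnion, Set.mem_range]
      exact ⟨(t : H), t.2, g, rfl⟩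
    | mul n₁ n₂ ih₁ ih₂ => rw [map_mul, map_mul]; exact mul_mem ih₁ ih₂
  | mul d₁ d₂ ih₁ ih₂ => rw [map_mul]; exact mul_mem ih₁ ih₂

lemma rho_inl_t0 (X : Coprod ↥(E.comap p) (CoprodI fun _ : T => G)) :
    rho G hT (Coprod.inl (rep hT 1)) (t0T hT, X) = (t0T hT, e0 G hT * X) := by
  rw [rho_inl_apply]
  have hrep : rep hT (rep hT 1 * rep hT 1) = rep hT 1 := by
    apply rep_eq hT (rep_mem hT 1)
    rw [show (rep hT 1 * rep hT 1)⁻¹ * rep hT 1 = (rep hT 1)⁻¹ by group]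
    exact inv_mem (t0_mem hT)
  have hu : uOf hT (rep hT 1 * rep hT 1) = u0 hT := by
    apply Subtype.ext
    rw [uOf_coe, hrep]
    show (rep hT 1)⁻¹ * (rep hT 1 * rep hT 1) = rep hT 1
    group
  refine Prod.ext (Subtype.ext ?_) ?_
  · show rep hT (rep hT 1 * rep hT 1) = rep hT 1
    exact hrep
  · show Coprod.inl (uOf hT (rep hT 1 * rep hT 1)) * X = e0 G hT * X
    rw [hu]; rfl

lemma rho_inl_t0_inv :
    rho G hT ((Coprod.inl (rep hT 1))⁻¹) (t0T hT, 1) = (t0T hT, (e0 G hT)⁻¹) := by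
  rw [← map_inv, rho_inl_apply]
  refine Prod.ext (Subtype.ext ?_) ?_
  · show rep hT ((rep hT 1)⁻¹ * rep hT 1) = rep hT 1
    rw [inv_mul_cancel]
  · show Coprod.inl (uOf hT ((rep hT 1)⁻¹ * rep hT 1)) * 1 = (e0 G hT)⁻¹
    rw [inv_mul_cancel, uOf_one hT, map_inv, mul_one]
    rfl

end FPAux

end

noncomputable section


/-- **Lemma (preimages of subgroups under free products).** Let `p : H → A` be a
homomorphism, `G` a group and `q = p * 1 : H * G → A`. For a subgroup `E ≤ A` and a
transversal `T` of `p⁻¹(E)` in `H`, the preimage `q⁻¹(E)` is generated by `p⁻¹(E)`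
together with the conjugates `t⁻¹Gt` for `t ∈ T`, and it is isomorphic to the free
product `p⁻¹(E) * (*_{t∈T} t⁻¹Gt) ≅ p⁻¹(E) * (*_{t∈T} G)`. -/
theorem comap_coprod_lift_free_product (H G A : Type u) [Group H] [Group G] [Group A]
    (p : H →* A) (E : Subgroup A) (T : Set H)
    (hT : ∀ h : H, ∃! t, t ∈ T ∧ h⁻¹ * t ∈ E.comap p) :
    (E.comap (Monoid.Coprod.lift p (1 : G →* A)) =
      Subgroup.closure
        ((Monoid.Coprod.inl '' (E.comap p : Set H)) ∪
          ⋃ t ∈ T, Set.range (fun g : G =>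
            (Monoid.Coprod.inl t)⁻¹ * Monoid.Coprod.inr g * Monoid.Coprod.inl t))) ∧
    Nonempty ((E.comap (Monoid.Coprod.lift p (1 : G →* A))) ≃*
      Monoid.Coprod (E.comap p) (Monoid.CoprodI (fun _ : T => G))) := by
  open FPAux Monoid in
  constructor
  · apply le_antisymm
    · intro x hx
      rw [Subgroup.mem_comap] at hx
      rw [key hT hx]
      refine mul_mem (mul_mem ?_ (phi_mem_closure G (p := p) (E := E) (T := T) _)) (inv_mem ?_) <;>
        exact Subgroup.subset_closure (Or.inl ⟨rep hT 1, t0_mem hT, rfl⟩)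
    · rw [Subgroup.closure_le]
      rintro x (⟨u, hu, rfl⟩ | hx)
      · show Coprod.lift p (1 : G →* A) (Coprod.inl u) ∈ E
        rw [Coprod.lift_apply_inl]
        exact hu
      · simp only [Set.mem_iUnion, Set.mem_range] at hx
        obtain ⟨t, ht, g, rfl⟩ := hx
        show Coprod.lift p (1 : G →* A)
            ((Coprod.inl t)⁻¹ * Coprod.inr g * Coprod.inl t) ∈ E
        have h1 : Coprod.lift p (1 : G →* A)
            ((Coprod.inl t)⁻¹ * Coprod.inr g * Coprod.inl t) = 1 := by
          rw [map_mul, map_mul, map_inv, Coprod.lift_apply_inl, Coprod.lift_apply_inr]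
          show (p t)⁻¹ * (1 : G →* A) g * p t = 1
          simp
        rw [h1]
        exact one_mem E
  · -- the isomorphism
    have hconj : ∀ x : ↥(E.comap (Coprod.lift p (1 : G →* A))),
        Coprod.lift p (1 : G →* A)
          (Coprod.inl (rep hT 1) * (x : Coprod H G) * (Coprod.inl (rep hT 1))⁻¹) ∈ E := by
      intro x
      rw [map_mul, map_mul, map_inv, Coprod.lift_apply_inl]
      exact mul_mem (mul_mem (t0_mem hT) x.2) (inv_mem (t0_mem hT))
    refine ⟨MulEquiv.ofBijective
      ({ toFun := fun x => (rho G hT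
            (Coprod.inl (rep hT 1) * (x : Coprod H G) * (Coprod.inl (rep hT 1))⁻¹)
            (t0T hT, 1)).2
         map_one' := by
           show (rho G hT
               (Coprod.inl (rep hT 1)
                 * ((1 : ↥(E.comap (Coprod.lift p (1 : G →* A)))) : Coprod H G)
                 * (Coprod.inl (rep hT 1))⁻¹) (t0T hT, 1)).2 = 1
           have h1 : (Coprod.inl (rep hT 1) : Coprod H G)
               * ((1 : ↥(E.comap (Coprod.lift p (1 : G →* A)))) : Coprod H G)
               * (Coprod.inl (rep hT 1))⁻¹ = 1 := by
             rw [OneMemClass.coe_one, mul_one, mul_inv_cancel]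
           rw [h1, map_one]
           rfl
         map_mul' := fun x y => by
           show (rho G hT (Coprod.inl (rep hT 1) * ((x * y : _) : Coprod H G)
                 * (Coprod.inl (rep hT 1))⁻¹) (t0T hT, 1)).2
             = (rho G hT (Coprod.inl (rep hT 1) * (x : Coprod H G)
                 * (Coprod.inl (rep hT 1))⁻¹) (t0T hT, 1)).2
               * (rho G hT (Coprod.inl (rep hT 1) * (y : Coprod H G)
                 * (Coprod.inl (rep hT 1))⁻¹) (t0T hT, 1)).2
           have hxy : Coprod.inl (rep hT 1) * ((x * y : _) : Coprod H G)
                 * (Coprod.inl (rep hT 1))⁻¹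
               = (Coprod.inl (rep hT 1) * (x : Coprod H G) * (Coprod.inl (rep hT 1))⁻¹)
                 * (Coprod.inl (rep hT 1) * (y : Coprod H G) * (Coprod.inl (rep hT 1))⁻¹) := by
             push_cast
             group
           have h1 : rho G hT
                 (Coprod.inl (rep hT 1) * (y : Coprod H G) * (Coprod.inl (rep hT 1))⁻¹)
                 (t0T hT, 1)
               = (t0T hT, (rho G hT
                 (Coprod.inl (rep hT 1) * (y : Coprod H G) * (Coprod.inl (rep hT 1))⁻¹)
                 (t0T hT, 1)).2) :=
             Prod.ext (rho_fst hT (hconj y) 1) rfl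
           rw [hxy, rho_mul_apply, h1,
             rho_snd hT (Coprod.inl (rep hT 1) * (x : Coprod H G) * (Coprod.inl (rep hT 1))⁻¹)]
         } : ↥(E.comap (Coprod.lift p (1 : G →* A))) →*
            Coprod ↥(E.comap p) (CoprodI fun _ : T => G)) ?_⟩
    constructor
    · -- injective
      intro x y hxy
      simp only [MonoidHom.coe_mk, OneHom.coe_mk] at hxy
      have kx := key hT (hconj x)
      have ky := key hT (hconj y)
      rw [hxy] at kx
      have h2 := kx.trans ky.symm
      have h3 : (x : Coprod H G) = (y : Coprod H G) :=
        mul_left_cancel (mul_right_cancel h2)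
      exact Subtype.ext h3
    · -- surjective
      intro d
      refine ⟨⟨phi G p E T d, ?_⟩, ?_⟩
      · rw [Subgroup.mem_comap]
        exact lift_phi_mem (G := G) (p := p) (E := E) (T := T) d
      · show (rho G hT (Coprod.inl (rep hT 1) * phi G p E T d * (Coprod.inl (rep hT 1))⁻¹)
            (t0T hT, 1)).2 = d
        rw [rho_mul_apply, rho_mul_apply, rho_inl_t0_inv hT, rho_phi hT d, rho_inl_t0 hT]
        show e0 G hT * ((e0 G hT)⁻¹ * d * e0 G hT * (e0 G hT)⁻¹) = d
        group
end
end

section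
/- Let H be a group acting freely on sets Δ and Ω', let X be a set with exactly r ≥ 1 elements equipped with the trivial H-action, and set Ω = Ω' ⊔ X with the componentwise H-action. Suppose f : Δ → Ω is an H-equivariant map and there exists a bijection θ : Δ → Ω such that the set {x ∈ Δ : f(x) ≠ θ(x)} is finite. Then H is finite and the order of H divides r. -/
noncomputable section

universe u

private lemma aux_dvd {H : Type u} [Group H] [Finite H] {Δ : Type u}
    (ρ : H →* Equiv.Perm Δ) (hfree : ∀ (h : H) (x : Δ), ρ h x = x → h = 1) :
    ∀ (n : ℕ) (P : Set Δ), P.Finite → (∀ (h : H) (x : Δ), x ∈ P → ρ h x ∈ P) →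
      P.ncard = n → Nat.card H ∣ n := by
  intro n
  induction n using Nat.strong_induction_on with
  | _ n ih =>
    intro P hPfin hPinv hcard
    rcases P.eq_empty_or_nonempty with rfl | ⟨x, hx⟩
    · simp only [Set.ncard_empty] at hcard
      exact hcard ▸ dvd_zero _
    · have hinj : Function.Injective (fun h : H => ρ h x) := by
        intro a b hab
        have h1 : ρ (b⁻¹ * a) x = x := by
          rw [map_mul, Equiv.Perm.mul_apply]
          simp only at hab
          rw [hab, ← Equiv.Perm.mul_apply, ← map_mul, inv_mul_cancel, map_one,
            Equiv.Perm.one_apply]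
        have := hfree _ _ h1
        rwa [inv_mul_eq_one, eq_comm] at this
      set O : Set Δ := Set.range (fun h => ρ h x) with hO
      have hOfin : O.Finite := Set.finite_range _
      have hOsub : O ⊆ P := by rintro _ ⟨h, rfl⟩; exact hPinv h x hx
      have hOcard : O.ncard = Nat.card H := by
        rw [← Nat.card_coe_set_eq]
        exact Nat.card_range_of_injective hinj
      have hinv' : ∀ (h : H) (y : Δ), y ∈ P \ O → ρ h y ∈ P \ O := by
        rintro h y ⟨hyP, hyO⟩
        refine ⟨hPinv h y hyP, ?_⟩
        rintro ⟨g, hg⟩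
        apply hyO
        refine ⟨h⁻¹ * g, ?_⟩
        simp only at hg ⊢
        rw [map_mul, Equiv.Perm.mul_apply, hg, ← Equiv.Perm.mul_apply, ← map_mul,
          inv_mul_cancel, map_one, Equiv.Perm.one_apply]
      have hsum : (P \ O).ncard + O.ncard = P.ncard :=
        Set.ncard_diff_add_ncard_of_subset hOsub hPfin
      have hpos : 0 < Nat.card H := Nat.card_pos
      have hlt : (P \ O).ncard < n := by omega
      have := ih _ hlt (P \ O) hPfin.diff hinv' rfl
      have : Nat.card H ∣ (P \ O).ncard + O.ncard := dvd_add this (hOcard ▸ dvd_refl _)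
      rwa [hsum, hcard] at this

/-- **Lemma.** Let `H` act freely on `Δ` and `Ω'`, let `X = Fin r` (`r ≥ 1`) carry
the trivial `H`-action and set `Ω = Ω' ⊔ X` with the componentwise action. If
`f : Δ → Ω` is `H`-equivariant and agrees with some bijection `θ : Δ → Ω` outside a
finite set, then `H` is finite and `|H|` divides `r`. -/
theorem finite_of_equivariant_almost_bijection (H : Type u) [Group H]
    (Δ Ω' : Type u) (r : ℕ) (hr : 1 ≤ r)
    (ρΔ : H →* Equiv.Perm Δ) (ρΩ : H →* Equiv.Perm Ω')
    (hfreeΔ : ∀ (h : H) (x : Δ), ρΔ h x = x → h = 1)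
    (hfreeΩ : ∀ (h : H) (x : Ω'), ρΩ h x = x → h = 1)
    (f : Δ → Ω' ⊕ Fin r)
    (hequiv : ∀ (h : H) (x : Δ), f (ρΔ h x) = Sum.map (ρΩ h) id (f x))
    (θ : Δ ≃ (Ω' ⊕ Fin r))
    (hfin : {x : Δ | f x ≠ θ x}.Finite) :
    Finite H ∧ Nat.card H ∣ r := by
  classical
  set S : Set Δ := {x | f x ≠ θ x} with hS
  have hinjOn : ∀ x y : Δ, x ∉ S → y ∉ S → f x = f y → x = y := by
    intro x y hx hy h
    simp only [hS, Set.mem_setOf_eq, not_not] at hx hy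
    exact θ.injective (by rw [← hx, ← hy, h])
  have hρΔinj : ∀ x : Δ, Function.Injective (fun h : H => ρΔ h x) := by
    intro x a b hab
    have h1 : ρΔ (b⁻¹ * a) x = x := by
      rw [map_mul, Equiv.Perm.mul_apply]
      simp only at hab
      rw [hab, ← Equiv.Perm.mul_apply, ← map_mul, inv_mul_cancel, map_one,
        Equiv.Perm.one_apply]
    have := hfreeΔ _ _ h1
    rwa [inv_mul_eq_one, eq_comm] at this
  have hρΩinj : ∀ ω : Ω', Function.Injective (fun h : H => ρΩ h ω) := by
    intro ω a b hab
    have h1 : ρΩ (b⁻¹ * a) ω = ω := by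
      rw [map_mul, Equiv.Perm.mul_apply]
      simp only at hab
      rw [hab, ← Equiv.Perm.mul_apply, ← map_mul, inv_mul_cancel, map_one,
        Equiv.Perm.one_apply]
    have := hfreeΩ _ _ h1
    rwa [inv_mul_eq_one, eq_comm] at this
  have hfiniteH : Finite H := by
    by_cases hinj : Function.Injective f
    · by_cases hA : ∃ (x : Δ) (i : Fin r), f x = Sum.inr i
      · -- case 2
        obtain ⟨x, i, hxi⟩ := hA
        have horb : ∀ h : H, f (ρΔ h x) = Sum.inr i := by
          intro h; rw [hequiv, hxi]; rfl
        by_cases hout : ∃ h₀ : H, ρΔ h₀ x ∉ S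
        · obtain ⟨h₀, hh₀⟩ := hout
          have hcover : (Set.univ : Set H) ⊆ (fun h => ρΔ h x) ⁻¹' S ∪ {h₀} := by
            intro h _
            by_cases hmem : ρΔ h x ∈ S
            · exact Or.inl hmem
            · right
              have : ρΔ h x = ρΔ h₀ x :=
                hinjOn _ _ hmem hh₀ (by rw [horb, horb])
              exact hρΔinj x this
          have : (Set.univ : Set H).Finite :=
            ((hfin.preimage (hρΔinj x).injOn).union (Set.finite_singleton h₀)).subset hcover
          exact Set.finite_univ_iff.mp this
        · push_neg at hout
          have : (Set.univ : Set H).Finite :=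
            (hfin.preimage (hρΔinj x).injOn).subset (fun h _ => hout h)
          exact Set.finite_univ_iff.mp this
      · -- case 3 : f injective, lands in inl
        push_neg at hA
        have hAll : ∀ x : Δ, ∃ ω : Ω', f x = Sum.inl ω := by
          intro x
          cases hfx : f x with
          | inl ω => exact ⟨ω, rfl⟩
          | inr i => exact absurd hfx (hA x i)
        choose g hg using hAll
        have hgeq : ∀ (h : H) (x : Δ), g (ρΔ h x) = ρΩ h (g x) := by
          intro h x
          have := hequiv h x
          rw [hg, hg, Sum.map_inl] at this
          exact Sum.inl_injective this
        have hginj : Function.Injective g := by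
          intro a b hab
          exact hinj (by rw [hg, hg, hab])
        have hMsub : ∀ ω : Ω', ω ∉ Set.range g → Sum.inl ω ∈ θ '' S := by
          intro ω hω
          by_contra hcon
          have hnotS : θ.symm (Sum.inl ω) ∉ S := by
            intro hmem
            exact hcon ⟨_, hmem, θ.apply_symm_apply _⟩
          have : f (θ.symm (Sum.inl ω)) = Sum.inl ω := by
            have : f (θ.symm (Sum.inl ω)) = θ (θ.symm (Sum.inl ω)) := not_not.mp hnotS
            rwa [θ.apply_symm_apply] at this
          exact hω ⟨_, Sum.inl_injective (by rw [← hg, this])⟩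
        have hMfin : ((Set.range g)ᶜ : Set Ω').Finite := by
          have : ((Set.range g)ᶜ : Set Ω') ⊆ Sum.inl ⁻¹' (θ '' S) := fun ω hω => hMsub ω hω
          exact (((hfin.image θ).preimage Sum.inl_injective.injOn)).subset this
        by_cases hM : ((Set.range g)ᶜ : Set Ω').Nonempty
        · obtain ⟨ω₀, hω₀⟩ := hM
          have hMinv : ∀ h : H, ρΩ h ω₀ ∈ ((Set.range g)ᶜ : Set Ω') := by
            intro h
            rintro ⟨z, hz⟩
            apply hω₀
            refine ⟨ρΔ h⁻¹ z, ?_⟩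
            rw [hgeq, hz, ← Equiv.Perm.mul_apply, ← map_mul, inv_mul_cancel, map_one,
              Equiv.Perm.one_apply]
          haveI := hMfin.to_subtype
          exact Finite.of_injective (fun h : H => (⟨ρΩ h ω₀, hMinv h⟩ : ((Set.range g)ᶜ : Set Ω')))
            (fun a b hab => hρΩinj ω₀ (congrArg Subtype.val hab))
        · exfalso
          have hsurj : Function.Surjective g := by
            intro ω
            by_contra hcon
            exact hM ⟨ω, fun hmem => hcon hmem⟩
          have hkey : θ '' S = f '' S ∪ Sum.inr '' (Set.univ : Set (Fin r)) := by
            apply Set.Subset.antisymm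
            · rintro _ ⟨s, hs, rfl⟩
              cases hθs : θ s with
              | inr j => exact Or.inr ⟨j, trivial, rfl⟩
              | inl ω =>
                obtain ⟨x, rfl⟩ := hsurj ω
                left
                refine ⟨x, ?_, hg x⟩
                intro hfx
                have hxs : x = s := θ.injective (by rw [hθs, ← hg]; exact hfx.symm)
                rw [hxs] at hfx
                exact hs hfx
            · rintro a (⟨s, hs, rfl⟩ | ⟨j, _, rfl⟩)
              · have ht : θ.symm (f s) ∈ S := by
                  intro htS
                  have h3 : f (θ.symm (f s)) = f s := by
                    have h2 : f (θ.symm (f s)) = θ (θ.symm (f s)) := htS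
                    rwa [θ.apply_symm_apply] at h2
                  have h4 := hinj h3
                  rw [h4] at htS
                  exact hs htS
                exact ⟨_, ht, θ.apply_symm_apply _⟩
              · have ht : θ.symm (Sum.inr j) ∈ S := by
                  intro htS
                  have : f (θ.symm (Sum.inr j)) = Sum.inr j := by
                    have h2 : f (θ.symm (Sum.inr j)) = θ (θ.symm (Sum.inr j)) := htS
                    rwa [θ.apply_symm_apply] at h2
                  rw [hg] at this
                  exact Sum.inl_ne_inr this
                exact ⟨_, ht, θ.apply_symm_apply _⟩
          have hdisj : Disjoint (f '' S) (Sum.inr '' (Set.univ : Set (Fin r))) := by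
            rw [Set.disjoint_left]
            rintro _ ⟨s, _, rfl⟩ ⟨j, _, hj⟩
            rw [hg] at hj
            exact Sum.inl_ne_inr hj.symm
          have hcard : (θ '' S).ncard = (f '' S).ncard + ((Sum.inr '' (Set.univ : Set (Fin r)) : Set (Ω' ⊕ Fin r))).ncard := by
            rw [hkey]
            exact Set.ncard_union_eq hdisj (hfin.image f) ((Set.finite_univ).image _)
          rw [Set.ncard_image_of_injective S θ.injective,
            Set.ncard_image_of_injective S hinj,
            Set.ncard_image_of_injective _ Sum.inr_injective, Set.ncard_univ,
            Nat.card_eq_fintype_card, Fintype.card_fin] at hcard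
          omega
    · -- case 1: f not injective
      obtain ⟨x, y, hxy, hne⟩ := Function.not_injective_iff.mp hinj
      have key : ∀ h : H, ρΔ h x ∈ S ∨ ρΔ h y ∈ S := by
        intro h
        by_contra hcon
        push_neg at hcon
        have heq : f (ρΔ h x) = f (ρΔ h y) := by rw [hequiv, hequiv, hxy]
        exact hne ((ρΔ h).injective (hinjOn _ _ hcon.1 hcon.2 heq))
      have hcover : (Set.univ : Set H) ⊆
          (fun h => ρΔ h x) ⁻¹' S ∪ (fun h => ρΔ h y) ⁻¹' S := fun h _ => key h
      have : (Set.univ : Set H).Finite :=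
        ((hfin.preimage (hρΔinj x).injOn).union (hfin.preimage (hρΔinj y).injOn)).subset hcover
      exact Set.finite_univ_iff.mp this
  refine ⟨hfiniteH, ?_⟩
  haveI := hfiniteH
  set W : Set Ω' := Sum.inl ⁻¹' (f '' S ∪ θ '' S) with hW
  have hWfin : W.Finite :=
    ((hfin.image f).union (hfin.image θ)).preimage Sum.inl_injective.injOn
  set T : Set Ω' := ⋃ h : H, ρΩ h '' W with hT
  have hTfin : T.Finite := Set.finite_iUnion (fun h => hWfin.image _)
  have hTinv : ∀ (h : H) (ω : Ω'), ω ∈ T → ρΩ h ω ∈ T := by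
    intro h ω hω
    rw [hT, Set.mem_iUnion] at hω
    obtain ⟨h', ω', hω', rfl⟩ := hω
    rw [hT, Set.mem_iUnion]
    refine ⟨h * h', ω', hω', ?_⟩
    rw [map_mul, Equiv.Perm.mul_apply]
  have hWT : W ⊆ T := by
    intro ω hω
    rw [hT, Set.mem_iUnion]
    exact ⟨1, ω, hω, by rw [map_one, Equiv.Perm.one_apply]⟩
  set Y : Set (Ω' ⊕ Fin r) := Sum.inl '' T ∪ Sum.inr '' Set.univ with hY
  have hYfin : Y.Finite := (hTfin.image _).union (Set.finite_univ.image _)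
  have hmemY : ∀ a : Ω' ⊕ Fin r, a ∈ f '' S ∪ θ '' S → a ∈ Y := by
    intro a ha
    cases a with
    | inl ω => exact Or.inl ⟨ω, hWT ha, rfl⟩
    | inr j => exact Or.inr ⟨j, trivial, rfl⟩
  have hPeq : f ⁻¹' Y = θ ⁻¹' Y := by
    ext x
    by_cases hx : x ∈ S
    · simp only [Set.mem_preimage]
      constructor
      · intro _; exact hmemY _ (Or.inr ⟨x, hx, rfl⟩)
      · intro _; exact hmemY _ (Or.inl ⟨x, hx, rfl⟩)
    · have hfx : f x = θ x := not_not.mp hx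
      simp only [Set.mem_preimage, hfx]
  have hPfin : (f ⁻¹' Y).Finite := by
    rw [hPeq]
    exact hYfin.preimage θ.injective.injOn
  have hPinv : ∀ (h : H) (x : Δ), x ∈ f ⁻¹' Y → ρΔ h x ∈ f ⁻¹' Y := by
    intro h x hx
    simp only [Set.mem_preimage] at hx ⊢
    rw [hequiv]
    rcases hx with ⟨ω, hω, hfx⟩ | ⟨j, _, hfx⟩
    · rw [← hfx]
      exact Or.inl ⟨ρΩ h ω, hTinv h ω hω, rfl⟩
    · rw [← hfx]
      exact Or.inr ⟨j, trivial, rfl⟩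
  have hdvdP : Nat.card H ∣ (f ⁻¹' Y).ncard := aux_dvd ρΔ hfreeΔ _ _ hPfin hPinv rfl
  have hdvdT : Nat.card H ∣ T.ncard := aux_dvd ρΩ hfreeΩ _ _ hTfin hTinv rfl
  have hdisjY : Disjoint (Sum.inl '' T : Set (Ω' ⊕ Fin r)) (Sum.inr '' Set.univ) := by
    rw [Set.disjoint_left]
    rintro _ ⟨ω, _, rfl⟩ ⟨j, _, hj⟩
    exact Sum.inr_ne_inl hj
  have hYcard : Y.ncard = T.ncard + r := by
    rw [hY, Set.ncard_union_eq hdisjY (hTfin.image _) (Set.finite_univ.image _),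
      Set.ncard_image_of_injective _ Sum.inl_injective,
      Set.ncard_image_of_injective _ Sum.inr_injective, Set.ncard_univ,
      Nat.card_eq_fintype_card, Fintype.card_fin]
  have hPcard : (f ⁻¹' Y).ncard = Y.ncard := by
    rw [hPeq]
    have himg : θ ⁻¹' Y = θ.symm '' Y := by
      ext a
      simp only [Set.mem_preimage, Set.mem_image]
      constructor
      · intro ha; exact ⟨θ a, ha, θ.symm_apply_apply a⟩
      · rintro ⟨b, hb, rfl⟩; rwa [θ.apply_symm_apply]
    rw [himg, Set.ncard_image_of_injective _ θ.symm.injective]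
  rw [hPcard, hYcard] at hdvdP
  exact (Nat.dvd_add_right hdvdT).mp hdvdP
end
end
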